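/- Let F(x)=(1+x^{-α})e^{-x^{-α}} for x>0 (Kendall max-stable law), α>0. Then the Williamson transform with parameter α equals G_F(x)=e^{-x^{-α}} for x>0, and m(α)=E[X^α]=1. -/

import Mathlib

open MeasureTheory Filter Topology Real Set

lemma auxTop {α : ℝ} (hα : 0 < α) :
    Tendsto (fun t : ℝ => t ^ (-α)) (𝓝[>] (0:ℝ)) atTop := by
  have h2 : Tendsto (fun t : ℝ => t ^ α) (𝓝[>] (0:ℝ)) (𝓝[>] (0:ℝ)) := by
    apply tendsto_nhdsWithin_of_tendsto_nhds_of_eventually_within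
    · have := (Real.continuousAt_rpow_const 0 α (Or.inr hα.le)).tendsto.mono_left
        (nhdsWithin_le_nhds (s := Ioi (0:ℝ)))
      simpa [Real.zero_rpow hα.ne'] using this
    · filter_upwards [self_mem_nhdsWithin] with t ht
      exact Real.rpow_pos_of_pos ht α
  refine (tendsto_inv_nhdsGT_zero.comp h2).congr' ?_
  filter_upwards [self_mem_nhdsWithin] with t ht
  simp [Function.comp, Real.rpow_neg ht.le]

lemma auxLim {α : ℝ} (hα : 0 < α) (s : ℝ) :
    Tendsto (fun t : ℝ => t ^ s * Real.exp (-t ^ (-α))) (𝓝[>] (0:ℝ)) (𝓝 0) := by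
  have h3 := (tendsto_rpow_mul_exp_neg_mul_atTop_nhds_zero (-(s/α)) 1 one_pos).comp (auxTop hα)
  refine h3.congr' ?_
  filter_upwards [self_mem_nhdsWithin] with t ht
  have : (t ^ (-α)) ^ (-(s/α)) = t ^ s := by
    rw [← Real.rpow_mul ht.le]
    congr 1
    field_simp
  simp only [Function.comp, this, neg_one_mul]

lemma cwaZero {f : ℝ → ℝ} (h0 : f 0 = 0) (h : Tendsto f (𝓝[>] (0:ℝ)) (𝓝 0)) :
    ContinuousWithinAt f (Ici (0:ℝ)) 0 := by
  rw [ContinuousWithinAt, h0, ← Set.Ioi_insert, nhdsWithin_insert]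
  exact tendsto_sup.mpr ⟨by simpa [h0] using tendsto_pure_nhds f 0, h⟩

lemma derivExp {α : ℝ} (hα : 0 < α) {t : ℝ} (ht : 0 < t) :
    HasDerivAt (fun t : ℝ => Real.exp (-t ^ (-α)))
      (Real.exp (-t ^ (-α)) * (α * t ^ (-α - 1))) t := by
  have h1 : HasDerivAt (fun t : ℝ => t ^ (-α)) (-α * t ^ (-α - 1)) t :=
    Real.hasDerivAt_rpow_const (Or.inl ht.ne')
  have := h1.neg.exp
  convert this using 1
  · rfl
  · simp only [Pi.neg_apply]; ring

theorem stmt16 (α : ℝ) (hα : 0 < α) (F G : ℝ → ℝ)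
    (hF : ∀ x > 0, F x = (1 + x ^ (-α)) * Real.exp (-x ^ (-α)))
    (hG : ∀ x > 0, G x = ∫ t in Set.Ioc (0:ℝ) x,
      (1 - (t / x) ^ α) * (α * t ^ (-2 * α - 1) * Real.exp (-t ^ (-α)))) :
    (∀ x > 0, G x = Real.exp (-x ^ (-α))) ∧
    (∫ t in Set.Ioi (0:ℝ), t ^ α * (α * t ^ (-2 * α - 1) * Real.exp (-t ^ (-α)))) = 1 := by
  constructor
  · intro x hx
    rw [hG x hx]
    set c : ℝ := x ^ (-α) with hc
    set g : ℝ → ℝ := fun t => (1 - (t / x) ^ α) * (α * t ^ (-2 * α - 1) * Real.exp (-t ^ (-α)))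
      with hgdef
    set H : ℝ → ℝ := fun t => if 0 < t then (1 + t ^ (-α) - c) * Real.exp (-t ^ (-α)) else 0
      with hHdef
    -- eventual equality of H with smooth expression near positive points
    have Heq : ∀ t : ℝ, 0 < t →
        H =ᶠ[𝓝 t] fun s => (1 + s ^ (-α) - c) * Real.exp (-s ^ (-α)) := by
      intro t ht
      filter_upwards [eventually_gt_nhds ht] with s hs
      simp [hHdef, hs]
    -- derivative of H at positive points equals g
    have Hderiv : ∀ t ∈ Set.Ioo (0:ℝ) x, HasDerivAt H (g t) t := by
      intro t ht
      have ht0 := ht.1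
      have h1 : HasDerivAt (fun s : ℝ => 1 + s ^ (-α) - c) (-α * t ^ (-α - 1)) t := by
        have := (Real.hasDerivAt_rpow_const (x := t) (p := -α) (Or.inl ht0.ne')).const_add 1
        simpa using this.sub_const c
      have h2 := derivExp hα ht0
      have h3 := h1.mul h2
      have key : g t = -α * t ^ (-α - 1) * Real.exp (-t ^ (-α)) +
          (1 + t ^ (-α) - c) * (Real.exp (-t ^ (-α)) * (α * t ^ (-α - 1))) := by
        have e1 : t ^ (-2*α - 1) = t ^ (-α) * t ^ (-α - 1) := by
          rw [← Real.rpow_add ht0]; ring_nf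
        have e2 : (t / x) ^ α = c * t ^ α := by
          rw [Real.div_rpow ht0.le hx.le, hc, Real.rpow_neg hx.le, div_eq_inv_mul]
        have e3 : t ^ α * t ^ (-α) = 1 := by
          rw [← Real.rpow_add ht0]; norm_num
        rw [hgdef]; simp only
        rw [e1, e2]
        linear_combination (-(c * α * Real.exp (-t ^ (-α)) * t ^ (-α - 1))) * e3
      rw [key]
      exact h3.congr_of_eventuallyEq (Heq t ht0)
    -- continuity of H on Icc 0 x
    have Hcont : ContinuousOn H (Set.Icc 0 x) := by
      intro t ht
      rcases eq_or_lt_of_le ht.1 with h0 | h0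
      · subst h0
        apply (cwaZero ?_ ?_).mono Set.Icc_subset_Ici_self
        · simp [hHdef]
        · have l1 : Tendsto (fun t : ℝ => Real.exp (-t ^ (-α))) (𝓝[>] (0:ℝ)) (𝓝 0) := by
            have := (auxLim hα 0)
            refine this.congr' ?_
            filter_upwards [self_mem_nhdsWithin] with s hs
            have : (0:ℝ) < s := hs
            simp [Real.rpow_zero]
          have l2 := auxLim hα (-α)
          have hlim : Tendsto (fun t : ℝ => (1 + t ^ (-α) - c) * Real.exp (-t ^ (-α)))
              (𝓝[>] (0:ℝ)) (𝓝 0) := by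
            have h := (l1.add l2).sub (l1.const_mul c)
            rw [show (0:ℝ) + 0 - c * 0 = 0 by ring] at h
            exact h.congr fun s => by ring
          refine hlim.congr' ?_
          filter_upwards [self_mem_nhdsWithin] with s hs
          simp [hHdef, Set.mem_Ioi.mp hs]
      · have c1 : ContinuousAt (fun s : ℝ => s ^ (-α)) t :=
          Real.continuousAt_rpow_const _ _ (Or.inl h0.ne')
        have : ContinuousAt (fun s : ℝ => (1 + s ^ (-α) - c) * Real.exp (-s ^ (-α))) t :=
          ((continuousAt_const.add c1).sub continuousAt_const).mul
            (Real.continuous_exp.continuousAt.comp c1.neg)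
        exact (this.congr (Heq t h0).symm).continuousWithinAt
    -- interval integrability of g
    have gcont : ContinuousOn g (Set.Icc 0 x) := by
      intro t ht
      rcases eq_or_lt_of_le ht.1 with h0 | h0
      · subst h0
        apply (cwaZero ?_ ?_).mono Set.Icc_subset_Ici_self
        · show g 0 = 0
          rw [hgdef]; simp only
          rw [Real.zero_rpow (by nlinarith : -2*α - 1 ≠ 0)]
          ring
        · have l2 : Tendsto (fun t : ℝ => α * t ^ (-2*α - 1) * Real.exp (-t ^ (-α)))
              (𝓝[>] (0:ℝ)) (𝓝 0) := by
            have h := (auxLim hα (-2*α - 1)).const_mul α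
            rw [mul_zero] at h
            exact h.congr fun s => by ring
          have l3 : Tendsto (fun t : ℝ => 1 - (t / x) ^ α) (𝓝[>] (0:ℝ)) (𝓝 1) := by
            have hdiv : Tendsto (fun t : ℝ => t / x) (𝓝[>] (0:ℝ)) (𝓝 0) := by
              simpa using ((continuous_id.div_const x).tendsto 0).mono_left
                (nhdsWithin_le_nhds (s := Ioi (0:ℝ)))
            have := ((Real.continuousAt_rpow_const 0 α (Or.inr hα.le)).tendsto).comp hdiv
            have h4 : Tendsto (fun t : ℝ => (t / x) ^ α) (𝓝[>] (0:ℝ)) (𝓝 0) := by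
              simpa [Function.comp_def, Real.zero_rpow hα.ne'] using this
            simpa using (tendsto_const_nhds (x := (1:ℝ))).sub h4
          have l4 := l3.mul l2
          rw [show (1:ℝ) * 0 = 0 by ring] at l4
          exact l4
      · have c1 : ContinuousAt (fun s : ℝ => s ^ (-α)) t :=
          Real.continuousAt_rpow_const _ _ (Or.inl h0.ne')
        have c2 : ContinuousAt (fun s : ℝ => s ^ (-2*α - 1)) t :=
          Real.continuousAt_rpow_const _ _ (Or.inl h0.ne')
        have c3 : ContinuousAt (fun s : ℝ => (s / x) ^ α) t := by
          apply ContinuousAt.comp (g := fun u : ℝ => u ^ α)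
          · exact Real.continuousAt_rpow_const _ _ (Or.inr hα.le)
          · exact continuousAt_id.div_const x
        exact (((continuousAt_const.sub c3).mul ((continuousAt_const.mul c2).mul
          (Real.continuous_exp.continuousAt.comp c1.neg)))).continuousWithinAt
    have gint : IntervalIntegrable g volume 0 x := by
      apply ContinuousOn.intervalIntegrable
      rwa [Set.uIcc_of_le hx.le]
    have hFTC := intervalIntegral.integral_eq_sub_of_hasDeriv_right_of_le hx.le Hcont
      (fun t ht => (Hderiv t ht).hasDerivWithinAt) gint
    rw [intervalIntegral.integral_of_le hx.le] at hFTC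
    rw [hFTC]
    simp [hHdef, hx, hc]
  · set f : ℝ → ℝ := fun t => if 0 < t then Real.exp (-t ^ (-α)) else 0 with hfdef
    have feq : ∀ t : ℝ, 0 < t → f =ᶠ[𝓝 t] fun s => Real.exp (-s ^ (-α)) := by
      intro t ht
      filter_upwards [eventually_gt_nhds ht] with s hs
      simp [hfdef, hs]
    have hcont : ContinuousWithinAt f (Set.Ici (0:ℝ)) 0 := by
      apply cwaZero (by simp [hfdef])
      have l1 : Tendsto (fun t : ℝ => Real.exp (-t ^ (-α))) (𝓝[>] (0:ℝ)) (𝓝 0) :=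
        tendsto_exp_neg_atTop_nhds_zero.comp (auxTop hα)
      refine l1.congr' ?_
      filter_upwards [self_mem_nhdsWithin] with s hs
      simp [hfdef, Set.mem_Ioi.mp hs]
    have hderiv : ∀ t ∈ Set.Ioi (0:ℝ), HasDerivAt f
        (t ^ α * (α * t ^ (-2 * α - 1) * Real.exp (-t ^ (-α)))) t := by
      intro t ht
      have h2 := derivExp hα ht
      have key : t ^ α * (α * t ^ (-2 * α - 1) * Real.exp (-t ^ (-α))) =
          Real.exp (-t ^ (-α)) * (α * t ^ (-α - 1)) := by
        have e1 : t ^ α * t ^ (-2*α - 1) = t ^ (-α - 1) := by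
          rw [← Real.rpow_add ht]; ring_nf
        calc t ^ α * (α * t ^ (-2 * α - 1) * Real.exp (-t ^ (-α)))
            = α * (t ^ α * t ^ (-2*α-1)) * Real.exp (-t ^ (-α)) := by ring
          _ = Real.exp (-t ^ (-α)) * (α * t ^ (-α - 1)) := by rw [e1]; ring
      rw [key]
      exact h2.congr_of_eventuallyEq (feq t ht)
    have hnonneg : ∀ t ∈ Set.Ioi (0:ℝ),
        0 ≤ t ^ α * (α * t ^ (-2 * α - 1) * Real.exp (-t ^ (-α))) := by
      intro t ht
      have ht' : (0:ℝ) < t := ht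
      positivity
    have htop : Tendsto f atTop (𝓝 1) := by
      have l1 : Tendsto (fun t : ℝ => Real.exp (-t ^ (-α))) atTop (𝓝 1) := by
        have h := (tendsto_rpow_neg_atTop hα).neg
        rw [neg_zero] at h
        have := (Real.continuous_exp.tendsto 0).comp h
        simpa [Function.comp_def] using this
      refine l1.congr' ?_
      filter_upwards [eventually_gt_atTop 0] with s hs
      simp [hfdef, hs]
    have := MeasureTheory.integral_Ioi_of_hasDerivAt_of_nonneg hcont hderiv hnonneg htop
    rw [this]
    simp [hfdef]
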